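/- Define E(a) = (b - √(b² - a(c-θ)))/a for 0 < a ≤ b²/(c-θ) (pure branch, with E extended by continuity) and E(a) = b/a for a ≥ b²/(c-θ) (mixed branch). Then E is continuous at the boundary a₀ = b²/(c-θ) with E(a₀) = b/a₀ = (c-θ)/b, E is increasing on (0, a₀], decreasing on [a₀, ∞), and hence attains its maximum over (0,∞) uniquely at a₀. -/

import Mathlib

/-- Equilibrium effort is single-peaked in `a`: increasing on the pure branch,
decreasing on the mixed branch, continuous at the boundary `a₀ = b²/(c-θ)`,
and uniquely maximized there. -/
theorem stmt9 (b c θ : ℝ) (hb : 0 < b) (hcθ : θ < c) :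
    let a₀ : ℝ := b^2/(c-θ)
    let E : ℝ → ℝ := fun a =>
      if a ≤ a₀ then (b - Real.sqrt (b^2 - a*(c-θ)))/a else b/a
    E a₀ = (c-θ)/b ∧ ContinuousAt E a₀ ∧
    StrictMonoOn E (Set.Ioc 0 a₀) ∧ StrictAntiOn E (Set.Ici a₀) ∧
    (∀ a, 0 < a → a ≠ a₀ → E a < E a₀) := by
  intro a₀ E
  have hk : 0 < c - θ := by linarith
  have ha₀ : 0 < a₀ := div_pos (by positivity) hk
  have ha₀k : a₀ * (c - θ) = b^2 := by show b^2/(c-θ)*(c-θ) = b^2; field_simp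
  -- E agrees with the unconditional formula for all a
  have hEf : ∀ a : ℝ, E a = (b - Real.sqrt (b^2 - a*(c-θ)))/a ∨ a ≤ a₀ ∧
      E a = (b - Real.sqrt (b^2 - a*(c-θ)))/a := by
    intro a; left
    by_cases h : a ≤ a₀
    · simp [E, h]
    · push_neg at h
      have hneg : b^2 - a*(c-θ) < 0 := by nlinarith [mul_lt_mul_of_pos_right h hk]
      simp [E, not_le.mpr h, Real.sqrt_eq_zero_of_nonpos hneg.le]
  have hEf' : ∀ a : ℝ, E a = (b - Real.sqrt (b^2 - a*(c-θ)))/a := by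
    intro a; rcases hEf a with h | ⟨_, h⟩ <;> exact h
  -- alternative form on the pure branch
  have hform : ∀ a ∈ Set.Ioc (0:ℝ) a₀,
      E a = (c-θ) / (b + Real.sqrt (b^2 - a*(c-θ))) := by
    rintro a ⟨ha, ha'⟩
    have hs : 0 ≤ b^2 - a*(c-θ) := by nlinarith [mul_le_mul_of_nonneg_right ha' hk.le]
    have hsq : Real.sqrt (b^2 - a*(c-θ)) ^ 2 = b^2 - a*(c-θ) := Real.sq_sqrt hs
    have hsn : 0 ≤ Real.sqrt (b^2 - a*(c-θ)) := Real.sqrt_nonneg _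
    have hden : 0 < b + Real.sqrt (b^2 - a*(c-θ)) := by linarith
    rw [hEf']
    rw [div_eq_div_iff (ne_of_gt ha) (ne_of_gt hden)]
    nlinarith [hsq]
  have hEa₀ : E a₀ = (c-θ)/b := by
    have : b^2 - a₀*(c-θ) = 0 := by rw [ha₀k]; ring
    rw [hform a₀ ⟨ha₀, le_refl _⟩, this, Real.sqrt_zero, add_zero]
  refine ⟨hEa₀, ?_, ?_, ?_, ?_⟩
  · -- continuity
    have hcf : ContinuousAt (fun a => (b - Real.sqrt (b^2 - a*(c-θ)))/a) a₀ := by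
      apply ContinuousAt.div
      · exact (continuousAt_const.sub ((Real.continuous_sqrt.comp (by continuity)).continuousAt))
      · exact continuousAt_id
      · exact ne_of_gt ha₀
    exact hcf.congr (Filter.Eventually.of_forall fun a => (hEf' a).symm)
  · -- strict mono on pure branch
    intro x hx y hy hxy
    rw [hform x hx, hform y hy]
    have hsy : 0 ≤ b^2 - y*(c-θ) := by
      nlinarith [mul_le_mul_of_nonneg_right hy.2 hk.le]
    have hlt : b^2 - y*(c-θ) < b^2 - x*(c-θ) := by nlinarith
    have hsqlt : Real.sqrt (b^2 - y*(c-θ)) < Real.sqrt (b^2 - x*(c-θ)) :=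
      Real.sqrt_lt_sqrt hsy hlt
    have hdy : 0 < b + Real.sqrt (b^2 - y*(c-θ)) := by
      have := Real.sqrt_nonneg (b^2 - y*(c-θ)); linarith
    exact div_lt_div_of_pos_left hk hdy (by linarith)
  · -- strict anti on mixed branch
    intro x hx y hy hxy
    have hEx : E x = b / x := by
      rcases eq_or_lt_of_le (Set.mem_Ici.mp hx) with h | h
      · rw [← h, hEa₀]; field_simp [a₀]; linear_combination ha₀k
      · have hneg : b^2 - x*(c-θ) < 0 := by
          nlinarith [mul_lt_mul_of_pos_right h hk]
        rw [hEf', Real.sqrt_eq_zero_of_nonpos hneg.le, sub_zero]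
    have hEy : E y = b / y := by
      have h : a₀ < y := lt_of_le_of_lt hx hxy
      have hneg : b^2 - y*(c-θ) < 0 := by
        nlinarith [mul_lt_mul_of_pos_right h hk]
      rw [hEf', Real.sqrt_eq_zero_of_nonpos hneg.le, sub_zero]
    rw [hEx, hEy]
    exact div_lt_div_of_pos_left hb (lt_of_lt_of_le ha₀ hx) hxy
  · -- unique max
    intro a ha hne
    rcases lt_or_gt_of_ne hne with h | h
    · have := hform -- pure branch
      have hmono : StrictMonoOn E (Set.Ioc 0 a₀) := by
        intro x hx y hy hxy
        rw [hform x hx, hform y hy]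
        have hsy : 0 ≤ b^2 - y*(c-θ) := by
          nlinarith [mul_le_mul_of_nonneg_right hy.2 hk.le]
        have hlt : b^2 - y*(c-θ) < b^2 - x*(c-θ) := by nlinarith
        have hsqlt : Real.sqrt (b^2 - y*(c-θ)) < Real.sqrt (b^2 - x*(c-θ)) :=
          Real.sqrt_lt_sqrt hsy hlt
        have hdy : 0 < b + Real.sqrt (b^2 - y*(c-θ)) := by
          have := Real.sqrt_nonneg (b^2 - y*(c-θ)); linarith
        exact div_lt_div_of_pos_left hk hdy (by linarith)
      exact hmono ⟨ha, h.le⟩ ⟨ha₀, le_refl _⟩ h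
    · have hneg : b^2 - a*(c-θ) < 0 := by
        nlinarith [mul_lt_mul_of_pos_right h hk]
      have hEa : E a = b / a := by
        rw [hEf', Real.sqrt_eq_zero_of_nonpos hneg.le, sub_zero]
      rw [hEa, hEa₀]
      rw [div_lt_div_iff₀ ha (by positivity)]
      have : a₀ * (c - θ) < a * (c - θ) := mul_lt_mul_of_pos_right h hk
      nlinarith
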